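/- With the setup of the previous context, the value maxId(v) (the minimum over admissible paths from s to v of the maximum intermediate vertex on the path) satisfies the following fixed-point recurrence: for every edge (u,v) in G with u < s and u reachable from s by an admissible path, maxId(v) ≤ max(maxId(u), u); and maxId is the pointwise-largest function satisfying maxId(w) = 0 (or -∞) for all direct out-neighbors w of s together with these inequalities. In other words, maxId is the least fixed point of the relaxation operator used by gSoFa. -/

import Mathlib

/-- `IsPath G a l b` : directed path from `a` to `b` with intermediate vertices `l`. -/
def IsPath (G : ℕ → ℕ → Prop) : ℕ → List ℕ → ℕ → Prop
  | a, [], b => G a b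
  | a, x :: xs, b => G a x ∧ IsPath G x xs b

/-- `maxId G s v` : min over admissible `s → v` paths (intermediates `< s`)
of the maximum intermediate vertex (`0` when no intermediates), `⊤` if none. -/
noncomputable def maxId (G : ℕ → ℕ → Prop) (s v : ℕ) : ℕ∞ :=
  sInf {m : ℕ∞ | ∃ l, IsPath G s l v ∧ (∀ x ∈ l, x < s) ∧ m = (l.foldr max 0 : ℕ)}

lemma isPath_append (G : ℕ → ℕ → Prop) (l : List ℕ) :
    ∀ a b u, (IsPath G a (l ++ [u]) b ↔ IsPath G a l u ∧ G u b) := by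
  induction l with
  | nil => intro a b u; simp [IsPath]
  | cons x xs ih => intro a b u; simp [IsPath, ih, and_assoc]

lemma foldr_max_append (l : List ℕ) (u : ℕ) :
    (l ++ [u]).foldr max 0 = max (l.foldr max 0) u := by
  induction l with
  | nil => simp
  | cons x xs ih => simp [ih, max_assoc]

theorem maxId_least_fixed_point (G : ℕ → ℕ → Prop) (s : ℕ) :
    (∀ w, G s w → maxId G s w = 0) ∧
    (∀ u v, G u v → u < s → (∃ l, IsPath G s l u ∧ ∀ x ∈ l, x < s) →
        maxId G s v ≤ max (maxId G s u) (u : ℕ∞)) ∧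
    (∀ f : ℕ → ℕ∞,
        (∀ w, G s w → f w = 0) →
        (∀ u v, G u v → u < s → f v ≤ max (f u) (u : ℕ∞)) →
        ∀ v, f v ≤ maxId G s v) := by
  refine ⟨?_, ?_, ?_⟩
  · intro w hw
    refine le_antisymm ?_ zero_le
    exact sInf_le ⟨[], hw, by simp, by simp⟩
  · intro u v huv hus ⟨l, hl, hlt⟩
    have hne : {m : ℕ∞ | ∃ l, IsPath G s l u ∧ (∀ x ∈ l, x < s) ∧
        m = (l.foldr max 0 : ℕ)}.Nonempty := ⟨_, ⟨l, hl, hlt, rfl⟩⟩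
    have hmem := csInf_mem hne
    obtain ⟨l0, hl0, hlt0, heq⟩ := hmem
    calc maxId G s v ≤ (((l0 ++ [u]).foldr max 0 : ℕ) : ℕ∞) := by
          apply sInf_le
          exact ⟨l0 ++ [u], (isPath_append G l0 s v u).2 ⟨hl0, huv⟩,
            by intro x hx; rcases List.mem_append.1 hx with h | h
               · exact hlt0 x h
               · simp only [List.mem_singleton] at h; subst h; exact hus, rfl⟩
      _ = max (maxId G s u) (u : ℕ∞) := by
          rw [foldr_max_append, maxId, heq]; rfl
  · intro f h0 hrel v
    apply le_sInf
    rintro m ⟨l, hp, hlt, rfl⟩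
    induction l using List.reverseRecOn generalizing v with
    | nil => simp [h0 v hp]
    | append_singleton l u ih =>
      obtain ⟨hl, huv⟩ := (isPath_append G l s v u).1 hp
      have hus : u < s := hlt u (by simp)
      calc f v ≤ max (f u) (u : ℕ∞) := hrel u v huv hus
        _ ≤ max ((l.foldr max 0 : ℕ) : ℕ∞) (u : ℕ∞) := by
            exact max_le_max (ih u hl (fun x hx => hlt x (by simp [hx]))) le_rfl
        _ = (((l ++ [u]).foldr max 0 : ℕ) : ℕ∞) := by
            rw [foldr_max_append]; rfl
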